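/- Let α > 1 be a real number, and take k = 2 with β_1 = α/(2α − 1) and β_2 = (α − 1)/(2α − 1); set β_3 = 0, S_1 = 0, S_2 = β_1. Then β_1, β_2 ≥ 0, β_1 + β_2 = 1, and max_{1 ≤ i ≤ 2} (α·β_i + (α − 1)·β_{i+1} + S_i) − max_{1 ≤ i ≤ 2} (α·β_i + S_i) = (α − 1)²/(2α − 1); that is, the upper bound (α − 1)²/(2α − 1) on the weight-growth exponent of a layered hierarchy is attained by exactly the hierarchy with three essential layers with exponents β_1 = α/(2α − 1) and β_2 = (α − 1)/(2α − 1). -/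

import Mathlib

/-- **The three-layer hierarchy attains the optimal weight-growth exponent.**
Let `α > 1`, `k = 2`, `β₁ = α/(2α − 1)`, `β₂ = (α − 1)/(2α − 1)`, `β₃ = 0`,
`S₁ = 0`, `S₂ = β₁`. Then `β₁, β₂ ≥ 0`, `β₁ + β₂ = 1`, and
`max_{1 ≤ i ≤ 2}(α·β_i + (α − 1)·β_{i+1} + S_i) − max_{1 ≤ i ≤ 2}(α·β_i + S_i)
  = (α − 1)²/(2α − 1)`. -/
theorem three_layer_hierarchy_optimal (α : ℝ) (hα : 1 < α)
    (β₁ β₂ : ℝ) (hβ₁ : β₁ = α / (2 * α - 1)) (hβ₂ : β₂ = (α - 1) / (2 * α - 1)) :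
    0 ≤ β₁ ∧ 0 ≤ β₂ ∧ β₁ + β₂ = 1
    ∧ max (α * β₁ + (α - 1) * β₂ + 0) (α * β₂ + (α - 1) * 0 + β₁)
        - max (α * β₁ + 0) (α * β₂ + β₁)
      = (α - 1) ^ 2 / (2 * α - 1) := by
  have hd : (0:ℝ) < 2 * α - 1 := by linarith
  have hd' : (2 * α - 1) ≠ 0 := ne_of_gt hd
  subst hβ₁ hβ₂
  refine ⟨div_nonneg (by linarith) hd.le, div_nonneg (by linarith) hd.le, by rw [← add_div, div_eq_one_iff_eq hd']; ring, ?_⟩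
  have h1 : α * (α / (2 * α - 1)) + (α - 1) * ((α - 1) / (2 * α - 1)) + 0
      = (α ^ 2 + (α - 1) ^ 2) / (2 * α - 1) := by field_simp; ring
  have h2 : α * ((α - 1) / (2 * α - 1)) + (α - 1) * 0 + α / (2 * α - 1)
      = α ^ 2 / (2 * α - 1) := by field_simp; ring
  have h3 : α * (α / (2 * α - 1)) + 0 = α ^ 2 / (2 * α - 1) := by field_simp; ring
  have h4 : α * ((α - 1) / (2 * α - 1)) + α / (2 * α - 1)
      = α ^ 2 / (2 * α - 1) := by field_simp; ring
  rw [h1, h2, h3, h4, max_self]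
  rw [max_eq_left (by gcongr ?_ / _; nlinarith)]
  field_simp
  ring
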